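/- arXiv:1801.03737 — 2 statements merged into one kernel-verified Lean document; each statement's English description precedes it below -/
import Mathlib

section
/- Let μ be a deterministic environment. For each initial state s ∈ S and each deterministic policy π, there is a unique history f_s(π) of length m generated by starting in s and following π; this defines f_s : Π₀ → H_m on the set Π₀ of deterministic policies. Let F(f_s) = {s' ∈ S : f_{s'} = f_s}. If μ* is another deterministic environment that is m-counterfactually equivalent to μ, with analogous sets F*(f) = {s* ∈ S* : f_{s*} = f} for f : Π₀ → H_m, then for every s ∈ S: μ(s₀ ∈ F(f_s)) = μ*(s₀ ∈ F*(f_s)), i.e. ∑_{s'∈F(f_s)} T₀(s') = ∑_{s*∈F*(f_s)} T₀*(s*). -/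
open scoped Classical
open Finset

/-- A POMDP without reward function ("environment"): finite sets of states, actions,
observations, a transition kernel `T`, an initial distribution `T0` and an
observation kernel `Obs`, all given as (row-)stochastic matrices of reals. -/
structure Env (S A O : Type) [Fintype S] [Fintype A] [Fintype O] where
  T : S → A → S → ℝ
  T0 : S → ℝ
  Obs : S → O → ℝ
  T_nonneg : ∀ s a s', 0 ≤ T s a s'
  T_sum : ∀ s a, ∑ s', T s a s' = 1
  T0_nonneg : ∀ s, 0 ≤ T0 s
  T0_sum : ∑ s, T0 s = 1
  Obs_nonneg : ∀ s o, 0 ≤ Obs s o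
  Obs_sum : ∀ s, ∑ o, Obs s o = 1

/-- A history `o₀a₁o₁…a_t o_t` is an initial observation together with a list of
action–observation pairs, stored in *reverse chronological order* (newest pair first). -/
abbrev Hist (A O : Type) := O × List (A × O)

/-- `HPrefix h h'` : the history `h` is an initial segment of `h'` (or equal to it). -/
def HPrefix {A O : Type} (h h' : Hist A O) : Prop := h.1 = h'.1 ∧ h.2 <:+ h'.2

/-- A policy maps histories to probability distributions over actions. -/
structure Policy (A O : Type) [Fintype A] where
  act : Hist A O → A → ℝ
  nonneg : ∀ h a, 0 ≤ act h a
  sum_one : ∀ h, ∑ a, act h a = 1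

/-- A deterministic policy: each output distribution is a point mass. -/
def Policy.IsDet {A O : Type} [Fintype A] (π : Policy A O) : Prop :=
  ∀ h, ∃ a, ∀ a', π.act h a' = if a' = a then 1 else 0

variable {S S' S'' A O : Type}

/-- Joint probability of a history together with the final state:
`histStateProb μ π o₀ l s` is the probability under `μ` and `π` of seeing the history
`(o₀, l)` and the state after the last observation being `s`. -/
noncomputable def histStateProb [Fintype S] [Fintype A] [Fintype O]
    (μ : Env S A O) (π : Policy A O) (o0 : O) : List (A × O) → S → ℝ
  | [], s => μ.T0 s * μ.Obs s o0
  | (a, o) :: rest, s =>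
      π.act (o0, rest) a * (∑ s', histStateProb μ π o0 rest s' * μ.T s' a s) * μ.Obs s o

/-- `μ(h | π)`: the probability of the history `h` under policy `π`:
`μ(o₀a₁o₁…a_t o_t | π) = ∑_{s₀…s_t} T₀(s₀)Obs(o₀|s₀)∏_k Obs(o_k|s_k)T(s_k|s_{k-1},a_k)π(a_k|…)`. -/
noncomputable def histProb [Fintype S] [Fintype A] [Fintype O]
    (μ : Env S A O) (π : Policy A O) (h : Hist A O) : ℝ :=
  ∑ s, histStateProb μ π h.1 h.2 s

/-- `μ(h' | h, π)`: conditional probability of a history given another, via Bayes' rule;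
set to `0` when `h` is not an initial segment of `h'` or the conditioning event has
probability `0`. -/
noncomputable def condProb [Fintype S] [Fintype A] [Fintype O]
    (μ : Env S A O) (π : Policy A O) (h h' : Hist A O) : ℝ :=
  if HPrefix h h' ∧ histProb μ π h ≠ 0 then histProb μ π h' / histProb μ π h else 0

/-- `m`-equivalence: all conditional probabilities of histories of length `≤ m`
coincide, for all policies. -/
def MEquiv [Fintype S] [Fintype S'] [Fintype A] [Fintype O]
    (μ : Env S A O) (μ' : Env S' A O) (m : ℕ) : Prop :=
  ∀ (π : Policy A O) (h h' : Hist A O), h.2.length ≤ m → h'.2.length ≤ m →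
    condProb μ π h h' = condProb μ' π h h'

/-- A deterministic environment policy of length `m`: a triple `(T̂₀, T̂, Ô)` with
`T̂₀ ∈ S`, `T̂ : S × A × {1,…,m} → S` (here `Fin m` with value `i` standing for turn `i+1`)
and `Ô : S × {0,…,m} → O`. -/
abbrev EnvPol (S A O : Type) (m : ℕ) := S × (S → A → Fin m → S) × (S → Fin (m + 1) → O)

/-- `μ(π_μ) = T₀(T̂₀) ⬝ ∏_{s,a,i} T(T̂(s,a,i)|s,a) ⬝ ∏_{s,i} Obs(Ô(s,i)|s)`. -/
noncomputable def envPolProb [Fintype S] [Fintype A] [Fintype O]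
    (μ : Env S A O) {m : ℕ} (ep : EnvPol S A O m) : ℝ :=
  μ.T0 ep.1 *
    ((∏ s, ∏ a, ∏ i, μ.T s a (ep.2.1 s a i)) * ∏ s, ∏ i, μ.Obs s (ep.2.2 s i))

/-- The state reached by following the environment policy `ep` along the actions of the
(reverse chronological) action–observation list: `s₀ = T̂₀`, `s_k = T̂(s_{k-1}, a_k, k)`. -/
def epState {m : ℕ} (ep : EnvPol S A O m) : List (A × O) → S
  | [] => ep.1
  | (a, _) :: rest =>
      if h : rest.length < m then ep.2.1 (epState ep rest) a ⟨rest.length, h⟩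
      else epState ep rest

/-- `μ(h | π_μ, π)`: the probability of the history `h = (o₀, l)` when the dynamics are
determined by the environment policy `ep` and the actions are drawn from `π`; it is
`∏_k π(a_k | h_{k-1})` if the observations of `h` match those generated by `ep` along the
actions of `h`, and `0` otherwise. -/
noncomputable def epHistProb {m : ℕ} [Fintype A] (ep : EnvPol S A O m) (π : Policy A O)
    (o0 : O) : List (A × O) → ℝ
  | [] => if ep.2.2 ep.1 0 = o0 then 1 else 0
  | (a, o) :: rest =>
      epHistProb ep π o0 rest * π.act (o0, rest) a *
        (if h : rest.length < m then
          (if ep.2.2 (ep.2.1 (epState ep rest) a ⟨rest.length, h⟩)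
              ⟨rest.length + 1, by omega⟩ = o then 1 else 0)
         else 0)

/-- `m`-counterfactual equivalence: for every finite collection `(h_{t_i}, π_i)` of
history–policy pairs with all `t_i ≤ m`,
`∑_{π_μ} μ(π_μ) ∏_i μ(h_{t_i}|π_μ,π_i) = ∑_{π_{μ'}} μ'(π_{μ'}) ∏_i μ'(h_{t_i}|π_{μ'},π_i)`. -/
def MCounterEquiv [Fintype S] [DecidableEq S] [Fintype S'] [DecidableEq S']
    [Fintype A] [DecidableEq A] [Fintype O]
    (μ : Env S A O) (μ' : Env S' A O) (m : ℕ) : Prop :=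
  ∀ (n : ℕ) (hs : Fin n → Hist A O) (πs : Fin n → Policy A O),
    (∀ i, (hs i).2.length ≤ m) →
    (∑ ep : EnvPol S A O m, envPolProb μ ep * ∏ i, epHistProb ep (πs i) (hs i).1 (hs i).2)
      = ∑ ep : EnvPol S' A O m, envPolProb μ' ep * ∏ i, epHistProb ep (πs i) (hs i).1 (hs i).2

/-- A deterministic environment: every transition and observation distribution is a
point mass. -/
def IsDetEnv [Fintype S] [Fintype A] [Fintype O] (μ : Env S A O) : Prop :=
  (∀ s a, ∃ s', ∀ s'', μ.T s a s'' = if s'' = s' then 1 else 0) ∧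
  (∀ s, ∃ o, ∀ o', μ.Obs s o' = if o' = o then 1 else 0)

/-- `μ(h | s₀ = s, π)` (probability of the history conditional on the initial state),
with the final state summed out below. -/
noncomputable def histStateProbFrom [Fintype S] [Fintype A] [Fintype O]
    (μ : Env S A O) (π : Policy A O) (s0 : S) (o0 : O) : List (A × O) → S → ℝ
  | [], s => (if s = s0 then 1 else 0) * μ.Obs s o0
  | (a, o) :: rest, s =>
      π.act (o0, rest) a *
        (∑ s', histStateProbFrom μ π s0 o0 rest s' * μ.T s' a s) * μ.Obs s o

/-- `μ(h | s₀ = s, π)`. -/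
noncomputable def histProbFrom [Fintype S] [Fintype A] [Fintype O]
    (μ : Env S A O) (π : Policy A O) (s0 : S) (h : Hist A O) : ℝ :=
  ∑ s, histStateProbFrom μ π s0 h.1 h.2 s

/-- The posterior `μ(s₀ = s | h)` over the initial state given a history, computed by
Bayes' rule from any policy `π` with `μ(h|π) > 0` (it is independent of the choice of
such a policy), and set to `0` if no such policy exists. -/
noncomputable def posterior [Fintype S] [Fintype A] [Fintype O]
    (μ : Env S A O) (h : Hist A O) (s : S) : ℝ :=
  if hex : ∃ π : Policy A O, 0 < histProb μ π h then
    μ.T0 s * histProbFrom μ hex.choose s h /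
      ∑ s', μ.T0 s' * histProbFrom μ hex.choose s' h
  else 0

/-- Given `m`, a pure learning process on `μ` is a map `P` from histories of length `≤ m`
to `[0,1]` realized, on some deterministic environment `μ'` that is `m`-counterfactually
equivalent to `μ`, as `P(h) = ∑_{s'} p_{s'} μ'(s₀ = s' | h)` for constants `p_{s'} ∈ [0,1]`. -/
def IsPureLearning [Fintype S] [DecidableEq S] [Fintype A] [DecidableEq A] [Fintype O]
    (μ : Env S A O) (m : ℕ) (P : Hist A O → ℝ) : Prop :=
  (∀ h : Hist A O, h.2.length ≤ m → P h ∈ Set.Icc (0 : ℝ) 1) ∧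
  ∃ (S' : Type) (_ : Fintype S') (_ : DecidableEq S') (μ' : Env S' A O) (p : S' → ℝ),
    IsDetEnv μ' ∧ MCounterEquiv μ μ' m ∧ (∀ s', p s' ∈ Set.Icc (0 : ℝ) 1) ∧
    ∀ h : Hist A O, h.2.length ≤ m → P h = ∑ s', p s' * posterior μ' h s'

/-- First components: the history (in reverse chronological order) generated after `t`
turns in a deterministic environment given by functions `(Td, Od)`, starting from state
`s0` and following the deterministic policy `p`; second component: the state reached. -/
def genHistAux (Td : S → A → S) (Od : S → O) (p : Hist A O → A) (s0 : S) :
    ℕ → List (A × O) × S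
  | 0 => ([], s0)
  | t + 1 =>
      let r := genHistAux Td Od p s0 t
      let a := p (Od s0, r.1)
      let s' := Td r.2 a
      ((a, Od s') :: r.1, s')

/-- `f_{s0}(p)` truncated at length `t`: the unique history of length `t` generated from
the initial state `s0` by the deterministic policy `p` in the deterministic environment
given by the functions `(Td, Od)`. -/
def genHist (Td : S → A → S) (Od : S → O) (p : Hist A O → A) (s0 : S) (t : ℕ) :
    Hist A O :=
  (Od s0, (genHistAux Td Od p s0 t).1)

/-- The fiber `F(f_s)` (for `s` a state of the deterministic environment `(Td', Od')`):
all initial states `s0` of the deterministic environment `(Td, Od)` whose generated-history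
map `f_{s0} : Π₀ → H_m` equals `f_s`. -/
noncomputable def fiber [Fintype S] (Td : S → A → S) (Od : S → O)
    (Td' : S' → A → S') (Od' : S' → O) (m : ℕ) (s : S') : Finset S :=
  Finset.univ.filter fun s0 => ∀ p : Hist A O → A, genHist Td Od p s0 m = genHist Td' Od' p s m

section Aux

/-- The deterministic policy (point mass) associated to a function `p : Hist → A`. -/
noncomputable def detPolicy {A O : Type} [Fintype A] [DecidableEq A] (p : Hist A O → A) :
    Policy A O where
  act h a := if a = p h then 1 else 0
  nonneg h a := by split <;> norm_num
  sum_one h := by simp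

/-- The canonical environment policy of a deterministic environment with initial state. -/
def cep {S A O : Type} (Td : S → A → S) (Od : S → O) (m : ℕ) (s0 : S) : EnvPol S A O m :=
  (s0, fun s a _ => Td s a, fun s _ => Od s)

lemma genHistAux_length {S A O : Type} (Td : S → A → S) (Od : S → O)
    (p : Hist A O → A) (s0 : S) : ∀ t, (genHistAux Td Od p s0 t).1.length = t
  | 0 => rfl
  | t + 1 => by simp [genHistAux, genHistAux_length Td Od p s0 t]

lemma genHistAux_congr {S A O : Type} (Td : S → A → S) (Od : S → O)
    {p p' : Hist A O → A} {m : ℕ}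
    (hp : ∀ h : Hist A O, h.2.length < m → p h = p' h) (s0 : S) :
    ∀ t, t ≤ m → genHistAux Td Od p s0 t = genHistAux Td Od p' s0 t
  | 0, _ => rfl
  | t + 1, ht => by
      have ih := genHistAux_congr Td Od hp s0 t (by omega)
      have hlen : (genHistAux Td Od p' s0 t).1.length = t :=
        genHistAux_length Td Od p' s0 t
      simp only [genHistAux, ih]
      rw [hp (Od s0, (genHistAux Td Od p' s0 t).1) (by simpa [hlen] using (by omega : t < m))]

@[simp] lemma detPolicy_act {A O : Type} [Fintype A] [DecidableEq A]
    (p : Hist A O → A) (h : Hist A O) (a : A) :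
    (detPolicy p).act h a = if a = p h then 1 else 0 := rfl

lemma genHistAux_succ {S A O : Type} (Td : S → A → S) (Od : S → O)
    (p : Hist A O → A) (s0 : S) (t : ℕ) :
    genHistAux Td Od p s0 (t + 1)
      = ((p (Od s0, (genHistAux Td Od p s0 t).1),
          Od (Td (genHistAux Td Od p s0 t).2 (p (Od s0, (genHistAux Td Od p s0 t).1)))) ::
          (genHistAux Td Od p s0 t).1,
         Td (genHistAux Td Od p s0 t).2 (p (Od s0, (genHistAux Td Od p s0 t).1))) := rfl

lemma epHistProb_cep_cons {S A O : Type} [Fintype A] [DecidableEq A]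
    (Td : S → A → S) (Od : S → O) {m : ℕ} (s0 : S) (p : Hist A O → A) (o0 : O)
    (a : A) (o : O) (rest : List (A × O)) (hlt : rest.length < m) :
    epHistProb (cep Td Od m s0) (detPolicy p) o0 ((a, o) :: rest)
      = epHistProb (cep Td Od m s0) (detPolicy p) o0 rest *
          (if a = p (o0, rest) then 1 else 0) *
          (if Od (Td (epState (cep Td Od m s0) rest) a) = o then 1 else 0) := by
  show epHistProb (cep Td Od m s0) (detPolicy p) o0 rest *
      (detPolicy p).act (o0, rest) a * _ = _
  rw [dif_pos hlt, detPolicy_act]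
  rfl

lemma epHistProb_cep {S A O : Type} [Fintype A] [DecidableEq A]
    (Td : S → A → S) (Od : S → O) (m : ℕ) (s0 : S) (p : Hist A O → A) (o0 : O) :
    ∀ l : List (A × O), l.length ≤ m →
      (epHistProb (cep Td Od m s0) (detPolicy p) o0 l
        = if o0 = Od s0 ∧ l = (genHistAux Td Od p s0 l.length).1 then 1 else 0)
      ∧ ((o0 = Od s0 ∧ l = (genHistAux Td Od p s0 l.length).1) →
          epState (cep Td Od m s0) l = (genHistAux Td Od p s0 l.length).2)
  | [], _ => by
      constructor
      · simp [epHistProb, cep, genHistAux, eq_comm]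
      · intro _; rfl
  | (a, o) :: rest, hlen => by
      have hlt : rest.length < m := by simp at hlen; omega
      obtain ⟨ih1, ih2⟩ := epHistProb_cep Td Od m s0 p o0 rest (le_of_lt hlt)
      rw [List.length_cons]
      by_cases hr : o0 = Od s0 ∧ rest = (genHistAux Td Od p s0 rest.length).1
      · have hst : epState (cep Td Od m s0) rest
            = (genHistAux Td Od p s0 rest.length).2 := ih2 hr
        obtain ⟨ho0, hrest⟩ := hr
        subst ho0
        obtain ⟨t, ht⟩ : ∃ t, rest.length = t := ⟨_, rfl⟩
        rw [ht] at ih1 ih2 hst hrest ⊢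
        subst hrest
        constructor
        · rw [epHistProb_cep_cons Td Od s0 p (Od s0) a o _ hlt, ih1,
            if_pos ⟨rfl, rfl⟩, one_mul, hst, genHistAux_succ]
          simp only [List.cons.injEq, Prod.mk.injEq, eq_self_iff_true, true_and, and_true]
          by_cases ha : a = p (Od s0, (genHistAux Td Od p s0 t).1)
          · subst ha
            rw [if_pos rfl, one_mul]
            by_cases ho : Od (Td (genHistAux Td Od p s0 t).2
                (p (Od s0, (genHistAux Td Od p s0 t).1))) = o
            · rw [if_pos ho, if_pos ⟨rfl, ho.symm⟩]
            · rw [if_neg ho, if_neg (fun hcc => ho hcc.2.symm)]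
          · rw [if_neg ha, zero_mul, if_neg (fun hcc => ha hcc.1)]
        · intro hc
          rw [genHistAux_succ] at hc
          have ha : a = p (Od s0, (genHistAux Td Od p s0 t).1) := by
            have h2 := hc.2
            simp only [List.cons.injEq, Prod.mk.injEq] at h2
            exact h2.1.1
          simp only [epState]
          rw [dif_pos hlt, hst, ha, genHistAux_succ]
          rfl
      · constructor
        · rw [epHistProb_cep_cons Td Od s0 p o0 a o rest hlt, ih1, if_neg hr,
            zero_mul, zero_mul, if_neg]
          rintro ⟨ho0, hc⟩
          rw [genHistAux_succ] at hc
          simp only [List.cons.injEq] at hc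
          exact hr ⟨ho0, hc.2⟩
        · rintro ⟨ho0, hc⟩
          rw [genHistAux_succ] at hc
          simp only [List.cons.injEq] at hc
          exact absurd ⟨ho0, hc.2⟩ hr

lemma sum_envPolProb_det {S A O : Type} [Fintype S] [DecidableEq S] [Fintype A] [DecidableEq A] [Fintype O]
    (μ : Env S A O) (m : ℕ) (Td : S → A → S) (Od : S → O)
    (hT : ∀ s a s', μ.T s a s' = if s' = Td s a then 1 else 0)
    (hO : ∀ s o, μ.Obs s o = if o = Od s then 1 else 0)
    (G : EnvPol S A O m → ℝ) :
    ∑ ep : EnvPol S A O m, envPolProb μ ep * G ep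
      = ∑ s0, μ.T0 s0 * G (cep Td Od m s0) := by
  classical
  have key : ∀ (s0 : S) (f1 : S → A → Fin m → S) (f2 : S → Fin (m+1) → O),
      envPolProb μ (s0, f1, f2)
        = if f1 = (fun s a _ => Td s a) ∧ f2 = (fun s _ => Od s)
          then μ.T0 s0 else 0 := by
    intro s0 f1 f2
    simp only [envPolProb, hT, hO, Finset.prod_boole, Finset.mem_univ, true_implies]
    have h1 : (∀ s a (i : Fin m), f1 s a i = Td s a) ↔ f1 = fun s a _ => Td s a := by
      constructor
      · intro h; funext s a i; exact h s a i
      · intro h s a i; rw [h]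
    have h2 : (∀ s (i : Fin (m+1)), f2 s i = Od s) ↔ f2 = fun s _ => Od s := by
      constructor
      · intro h; funext s i; exact h s i
      · intro h s i; rw [h]
    by_cases hc1 : ∀ s a (i : Fin m), f1 s a i = Td s a
    · by_cases hc2 : ∀ s (i : Fin (m+1)), f2 s i = Od s
      · rw [if_pos hc1, if_pos hc2, if_pos ⟨h1.1 hc1, h2.1 hc2⟩]; ring
      · rw [if_neg hc2,
          if_neg (show ¬((f1 = fun s a _ => Td s a) ∧ f2 = fun s _ => Od s) from
            fun hcc => hc2 (h2.2 hcc.2))]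
        ring
    · rw [if_neg hc1,
        if_neg (show ¬((f1 = fun s a _ => Td s a) ∧ f2 = fun s _ => Od s) from
          fun hcc => hc1 (h1.2 hcc.1))]
      ring
  rw [Fintype.sum_prod_type]
  refine Finset.sum_congr rfl fun s0 _ => ?_
  rw [Fintype.sum_prod_type]
  rw [Finset.sum_eq_single (fun s a (_ : Fin m) => Td s a)]
  · rw [Finset.sum_eq_single (fun s (_ : Fin (m+1)) => Od s)]
    · rw [key]; simp [cep]
    · intro f2 _ hne; rw [key]; simp [hne]
    · simp
  · intro f1 _ hne
    apply Finset.sum_eq_zero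
    intro f2 _
    rw [key]; simp [hne]
  · simp

noncomputable instance boundedListFintype {α : Type} [Fintype α] (m : ℕ) :
    Fintype {l : List α // l.length ≤ m} := by
  classical
  apply Fintype.ofInjective (fun l : {l : List α // l.length ≤ m} =>
    (fun i : Fin (m+1) => l.1[(i : ℕ)]?))
  intro l1 l2 h
  apply Subtype.ext
  apply List.ext_getElem?
  intro i
  by_cases hi : i < m + 1
  · exact congrFun h ⟨i, hi⟩
  · rw [List.getElem?_eq_none (by omega : l1.1.length ≤ i),
        List.getElem?_eq_none (by omega : l2.1.length ≤ i)]

lemma sum_prod_epHistProb {S2 S1 A O : Type} [Fintype S2] [DecidableEq S2]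
    [Fintype A] [DecidableEq A] [Fintype O]
    (Tc : S2 → A → S2) (Oc : S2 → O) (Td : S1 → A → S1) (Od : S1 → O)
    (m : ℕ) (s : S1) (T0 : S2 → ℝ) {n : ℕ} (ps : Fin n → Hist A O → A)
    (hcover : ∀ p : Hist A O → A, ∃ i : Fin n,
      ∀ h : Hist A O, h.2.length < m → ps i h = p h) :
    ∑ s0, T0 s0 * ∏ i, epHistProb (cep Tc Oc m s0) (detPolicy (ps i))
        (genHist Td Od (ps i) s m).1 (genHist Td Od (ps i) s m).2
      = ∑ s0 ∈ fiber Tc Oc Td Od m s, T0 s0 := by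
  classical
  rw [fiber, Finset.sum_filter]
  refine Finset.sum_congr rfl fun s0 _ => ?_
  have hfac : ∀ i : Fin n, epHistProb (cep Tc Oc m s0) (detPolicy (ps i))
        (genHist Td Od (ps i) s m).1 (genHist Td Od (ps i) s m).2
      = if Od s = Oc s0 ∧ (genHistAux Td Od (ps i) s m).1
            = (genHistAux Tc Oc (ps i) s0 m).1 then 1 else 0 := by
    intro i
    have hl : (genHistAux Td Od (ps i) s m).1.length = m :=
      genHistAux_length Td Od (ps i) s m
    have := (epHistProb_cep Tc Oc m s0 (ps i) (Od s)
      (genHistAux Td Od (ps i) s m).1 (le_of_eq hl)).1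
    rw [hl] at this
    exact this
  simp only [genHist] at hfac ⊢
  rw [Finset.prod_congr rfl (fun i _ => hfac i), Finset.prod_boole]
  have hiff : (∀ i ∈ Finset.univ (α := Fin n), Od s = Oc s0 ∧
        (genHistAux Td Od (ps i) s m).1 = (genHistAux Tc Oc (ps i) s0 m).1)
      ↔ (∀ p : Hist A O → A, genHist Tc Oc p s0 m = genHist Td Od p s m) := by
    constructor
    · intro h p
      obtain ⟨i, hi⟩ := hcover p
      have h1 : genHistAux Tc Oc p s0 m = genHistAux Tc Oc (ps i) s0 m :=
        (genHistAux_congr Tc Oc (fun h hh => (hi h hh).symm) s0 m le_rfl)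
      have h2 : genHistAux Td Od p s m = genHistAux Td Od (ps i) s m :=
        (genHistAux_congr Td Od (fun h hh => (hi h hh).symm) s m le_rfl)
      obtain ⟨ho, hl⟩ := h i (Finset.mem_univ i)
      simp only [genHist, h1, h2]
      exact Prod.ext ho.symm hl.symm
    · intro h i _
      have := h (ps i)
      simp only [genHist, Prod.mk.injEq] at this
      exact ⟨this.1.symm, this.2.symm⟩
  split_ifs with h1 h2 h2
  · rw [mul_one]; exact (if_pos h2).symm
  · exact absurd (hiff.1 h1) h2
  · exact absurd (hiff.2 h2) h1
  · rw [mul_zero]; exact (if_neg h2).symm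

end Aux

/-- Let `μ` and `μ*` be deterministic environments (kernels the point
masses of `(Td, Od)` and `(Tds, Ods)`) that are `m`-counterfactually equivalent. For each
initial state `s`, let `f_s : Π₀ → H_m` be the map sending a deterministic policy to the
unique history of length `m` it generates from `s`, and `F(f_s)`, `F*(f_s)` the fibers of
states of `μ`, resp. `μ*`, with the same generated-history map. Then for every `s ∈ S`,
`μ(s₀ ∈ F(f_s)) = μ*(s₀ ∈ F*(f_s))`, i.e. `∑_{s'∈F(f_s)} T₀(s') = ∑_{s*∈F*(f_s)} T₀*(s*)`. -/
theorem fiber_prob_eq_of_counterfactual_equiv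
    {S Sstar A O : Type} [Fintype S] [DecidableEq S] [Fintype Sstar] [DecidableEq Sstar]
    [Fintype A] [DecidableEq A] [Fintype O]
    (μ : Env S A O) (μstar : Env Sstar A O) (m : ℕ)
    (Td : S → A → S) (Od : S → O)
    (hT : ∀ s a s', μ.T s a s' = if s' = Td s a then 1 else 0)
    (hO : ∀ s o, μ.Obs s o = if o = Od s then 1 else 0)
    (Tds : Sstar → A → Sstar) (Ods : Sstar → O)
    (hTs : ∀ s a s', μstar.T s a s' = if s' = Tds s a then 1 else 0)
    (hOs : ∀ s o, μstar.Obs s o = if o = Ods s then 1 else 0)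
    (hce : MCounterEquiv μ μstar m) :
    ∀ s : S,
      ∑ s' ∈ fiber Td Od Td Od m s, μ.T0 s'
        = ∑ sstar ∈ fiber Tds Ods Td Od m s, μstar.T0 sstar := by
  classical
  intro s
  let I := (O × {l : List (A × O) // l.length ≤ m}) → A
  let n := Fintype.card I
  let e : Fin n ≃ I := (Fintype.equivFin I).symm
  let ext : I → Hist A O → A := fun q h =>
    if hl : h.2.length ≤ m then q (h.1, ⟨h.2, hl⟩) else q (h.1, ⟨[], by simp⟩)
  let ps : Fin n → Hist A O → A := fun i => ext (e i)
  have hcover : ∀ p : Hist A O → A, ∃ i : Fin n,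
      ∀ h : Hist A O, h.2.length < m → ps i h = p h := by
    intro p
    refine ⟨e.symm (fun hb => p (hb.1, hb.2.1)), fun h hh => ?_⟩
    show ext (e (e.symm _)) h = p h
    rw [Equiv.apply_symm_apply]
    simp only [ext, dif_pos (le_of_lt hh)]
  let hsf : Fin n → Hist A O := fun i => genHist Td Od (ps i) s m
  let πs : Fin n → Policy A O := fun i => detPolicy (ps i)
  have hmain := hce n hsf πs (fun i => le_of_eq (genHistAux_length Td Od (ps i) s m))
  rw [sum_envPolProb_det μ m Td Od hT hO, sum_envPolProb_det μstar m Tds Ods hTs hOs]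
    at hmain
  calc ∑ s' ∈ fiber Td Od Td Od m s, μ.T0 s'
      = ∑ s0, μ.T0 s0 * ∏ i, epHistProb (cep Td Od m s0) (detPolicy (ps i))
          (genHist Td Od (ps i) s m).1 (genHist Td Od (ps i) s m).2 :=
        (sum_prod_epHistProb Td Od Td Od m s μ.T0 ps hcover).symm
    _ = ∑ s0, μstar.T0 s0 * ∏ i, epHistProb (cep Tds Ods m s0) (detPolicy (ps i))
          (genHist Td Od (ps i) s m).1 (genHist Td Od (ps i) s m).2 := hmain
    _ = ∑ sstar ∈ fiber Tds Ods Td Od m s, μstar.T0 sstar :=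
        sum_prod_epHistProb Tds Ods Td Od m s μstar.T0 ps hcover
end

section
/- Let μ be the environment with S = Ω = {s₀, s⁰⁰, s⁰¹, s¹⁰, s¹¹}, A = {a⁰, a¹}, identity observations, T₀ the point mass at s₀, T(s^{i0} | s₀, a^i) = T(s^{i1} | s₀, a^i) = 1/2, and all other states absorbing. Let μ'' be the deterministic environment with S'' = {s₀⁰, s₀¹, s⁰⁰, s⁰¹, s¹⁰, s¹¹}, the same A, observation set Ω with Obs''(s₀⁰) = Obs''(s₀¹) = s₀ and identity on the others, T₀''(s₀⁰) = T₀''(s₀¹) = 1/2, transitions T''(s⁰⁰ | s₀⁰, a⁰) = 1, T''(s¹⁰ | s₀⁰, a¹) = 1, T''(s⁰¹ | s₀¹, a⁰) = 1, T''(s¹¹ | s₀¹, a¹) = 1, and all other states absorbing. Then: (i) μ and μ'' are 1-equivalent, but (ii) μ and μ'' are NOT 1-counterfactually equivalent; in particular, for the two deterministic policies π⁰ (always play a⁰) and π¹ (always play a¹) and the histories h = s₀a⁰s⁰⁰ and h' = s₀a¹s¹¹, the quantity ∑_{π_μ} μ(π_μ) μ(h | π_μ, π⁰) μ(h' | π_μ,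 π¹) is strictly positive for μ but equals 0 for μ''. -/
open scoped Classical
open Finset

variable {S S' S'' A O : Type}

/-! States of `μ` (= observations): `0 = s₀`, `1 = s⁰⁰`, `2 = s⁰¹`, `3 = s¹⁰`, `4 = s¹¹`;
actions `0 = a⁰`, `1 = a¹`.
States of `μ''`: `0 = s₀⁰`, `1 = s₀¹`, `2 = s⁰⁰`, `3 = s⁰¹`, `4 = s¹⁰`, `5 = s¹¹`. -/

/-- Environment `μ`: one initial state, two choices, four equally likely outcomes,
identity observations, all non-initial states absorbing. -/
noncomputable def muEx : Env (Fin 5) (Fin 2) (Fin 5) where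
  T := fun s a s' =>
    if s = 0 then
      (if a = 0 then (if s' = 1 ∨ s' = 2 then (1 : ℝ) / 2 else 0)
       else (if s' = 3 ∨ s' = 4 then (1 : ℝ) / 2 else 0))
    else (if s' = s then 1 else 0)
  T0 := fun s => if s = 0 then 1 else 0
  Obs := fun s o => if o = s then 1 else 0
  T_nonneg := by intro s a s'; split_ifs <;> norm_num
  T_sum := by intro s a; fin_cases s <;> fin_cases a <;> simp [Fin.sum_univ_five] <;> norm_num
  T0_nonneg := by intro s; split_ifs <;> norm_num
  T0_sum := by simp [Fin.sum_univ_five]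
  Obs_nonneg := by intro s o; split_ifs <;> norm_num
  Obs_sum := by intro s; simp [Finset.sum_ite_eq']

/-- The deterministic environment `μ''`: two equally likely initial states (both observed
as `s₀`), with `s₀⁰ →(a⁰) s⁰⁰`, `s₀⁰ →(a¹) s¹⁰`, `s₀¹ →(a⁰) s⁰¹`, `s₀¹ →(a¹) s¹¹`, all
deterministic, other states absorbing: the four outcomes are counterfactually correlated. -/
noncomputable def muExPP : Env (Fin 6) (Fin 2) (Fin 5) where
  T := fun s a s' =>
    if s = 0 ∨ s = 1 then
      (if s' = (if s = 0 then (if a = 0 then 2 else 4) else (if a = 0 then 3 else 5))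
       then 1 else 0)
    else (if s' = s then 1 else 0)
  T0 := fun s => if s = 0 ∨ s = 1 then (1 : ℝ) / 2 else 0
  Obs := fun s o => if o = ![0, 0, 1, 2, 3, 4] s then 1 else 0
  T_nonneg := by intro s a s'; split_ifs <;> norm_num
  T_sum := by intro s a; fin_cases s <;> fin_cases a <;> simp [Finset.sum_ite_eq']
  T0_nonneg := by intro s; split_ifs <;> norm_num
  T0_sum := by simp [Fin.sum_univ_six]; norm_num
  Obs_nonneg := by intro s o; split_ifs <;> norm_num
  Obs_sum := by intro s; simp [Finset.sum_ite_eq']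

/-- The deterministic policy that always plays the action `a`. -/
noncomputable def polConst (a : Fin 2) : Policy (Fin 2) (Fin 5) where
  act := fun _ a' => if a' = a then 1 else 0
  nonneg := by intro h a'; split_ifs <;> norm_num
  sum_one := by intro h; simp [Finset.sum_ite_eq']


lemma envPolProb_nonneg' {S A O : Type} [Fintype S] [Fintype A] [Fintype O]
    (μ : Env S A O) {m : ℕ} (ep : EnvPol S A O m) : 0 ≤ envPolProb μ ep := by
  unfold envPolProb
  refine mul_nonneg (μ.T0_nonneg _) (mul_nonneg ?_ ?_)
  · exact Finset.prod_nonneg fun s _ => Finset.prod_nonneg fun a _ =>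
      Finset.prod_nonneg fun i _ => μ.T_nonneg _ _ _
  · exact Finset.prod_nonneg fun s _ => Finset.prod_nonneg fun i _ => μ.Obs_nonneg _ _

lemma epHistProb_nonneg' {S A O : Type} [Fintype A] {m : ℕ} (ep : EnvPol S A O m)
    (π : Policy A O) (o0 : O) : ∀ l, 0 ≤ epHistProb ep π o0 l
  | [] => by unfold epHistProb; split <;> norm_num
  | (a, o) :: rest => by
    unfold epHistProb
    refine mul_nonneg (mul_nonneg (epHistProb_nonneg' ep π o0 rest) (π.nonneg _ _)) ?_
    split
    · split <;> norm_num
    · norm_num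

lemma muEx_T : muEx.T = fun s a s' =>
    if s = 0 then
      (if a = 0 then (if s' = 1 ∨ s' = 2 then (1 : ℝ) / 2 else 0)
       else (if s' = 3 ∨ s' = 4 then (1 : ℝ) / 2 else 0))
    else (if s' = s then 1 else 0) := rfl

lemma muEx_T0 : muEx.T0 = fun s => if s = 0 then 1 else 0 := rfl

lemma muEx_Obs : muEx.Obs = fun s o => if o = s then 1 else 0 := rfl

lemma muExPP_T : muExPP.T = fun s a s' =>
    if s = 0 ∨ s = 1 then
      (if s' = (if s = 0 then (if a = 0 then 2 else 4) else (if a = 0 then 3 else 5))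
       then 1 else 0)
    else (if s' = s then 1 else 0) := rfl

lemma muExPP_T0 : muExPP.T0 = fun s => if s = 0 ∨ s = 1 then (1 : ℝ) / 2 else 0 := rfl

lemma muExPP_Obs : muExPP.Obs = fun s o => if o = ![0, 0, 1, 2, 3, 4] s then 1 else 0 := rfl

lemma muExPP_Obs' (s : Fin 6) (o : Fin 5) : muExPP.Obs s o =
    if o = (if s = 0 ∨ s = 1 then 0 else if s = 2 then 1 else if s = 3 then 2
            else if s = 4 then 3 else 4) then 1 else 0 := by
  fin_cases s <;> simp [muExPP_Obs] <;> rfl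

lemma polConst_act (a : Fin 2) : (polConst a).act = fun _ a' => if a' = a then 1 else 0 := rfl

set_option maxHeartbeats 2000000 in
lemma histProb_eq_aux (π : Policy (Fin 2) (Fin 5)) (h : Hist (Fin 2) (Fin 5))
    (hl : h.2.length ≤ 1) : histProb muEx π h = histProb muExPP π h := by
  obtain ⟨o0, _ | ⟨⟨a, o⟩, l⟩⟩ := h
  · unfold histProb histStateProb
    fin_cases o0 <;>
      simp [muEx_T0, muEx_Obs, muExPP_T0, muExPP_Obs, Fin.sum_univ_five, Fin.sum_univ_six] <;> norm_num
  · simp only [List.length_cons, Nat.succ_le_succ_iff, Nat.le_zero, List.length_eq_zero_iff] at hl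
    subst hl
    fin_cases o0 <;> fin_cases a <;> fin_cases o <;>
      simp [histProb, histStateProb, muEx_T, muEx_T0, muEx_Obs, muExPP_T, muExPP_T0,
        muExPP_Obs', Fin.sum_univ_five, Fin.sum_univ_six] <;> ring


lemma envPolProb_eq_zero_T0 {S A O : Type} [Fintype S] [Fintype A] [Fintype O]
    (μ : Env S A O) {m : ℕ} (ep : EnvPol S A O m) (h : μ.T0 ep.1 = 0) :
    envPolProb μ ep = 0 := by
  unfold envPolProb; rw [h, zero_mul]

lemma envPolProb_eq_zero_T {S A O : Type} [Fintype S] [Fintype A] [Fintype O]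
    (μ : Env S A O) {m : ℕ} (ep : EnvPol S A O m) (s : S) (a : A) (i : Fin m)
    (h : μ.T s a (ep.2.1 s a i) = 0) : envPolProb μ ep = 0 := by
  unfold envPolProb
  rw [Finset.prod_eq_zero (Finset.mem_univ s) (Finset.prod_eq_zero (Finset.mem_univ a)
    (Finset.prod_eq_zero (Finset.mem_univ i) h))]
  ring

lemma envPolProb_eq_zero_Obs {S A O : Type} [Fintype S] [Fintype A] [Fintype O]
    (μ : Env S A O) {m : ℕ} (ep : EnvPol S A O m) (s : S) (i : Fin (m + 1))
    (h : μ.Obs s (ep.2.2 s i) = 0) : envPolProb μ ep = 0 := by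
  unfold envPolProb
  have h2 : (∏ s, ∏ i, μ.Obs s (ep.2.2 s i)) = 0 :=
    Finset.prod_eq_zero (Finset.mem_univ s) (Finset.prod_eq_zero (Finset.mem_univ i) h)
  rw [h2]
  ring

/-- The environments `μ` and `μ''` are `1`-equivalent but NOT
`1`-counterfactually equivalent; in particular, for the deterministic policies
`π⁰` (always `a⁰`) and `π¹` (always `a¹`) and the histories `h = s₀a⁰s⁰⁰` and
`h' = s₀a¹s¹¹`, the quantity `∑_{π_μ} μ(π_μ) μ(h|π_μ,π⁰) μ(h'|π_μ,π¹)` is strictly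
positive for `μ` but equals `0` for `μ''`. -/
theorem muEx_muExPP_equivalent_not_counterfactually_equivalent :
    MEquiv muEx muExPP 1 ∧
    ¬ MCounterEquiv muEx muExPP 1 ∧
    (0 < ∑ ep : EnvPol (Fin 5) (Fin 2) (Fin 5) 1,
        envPolProb muEx ep *
          (epHistProb ep (polConst 0) 0 [(0, 1)] * epHistProb ep (polConst 1) 0 [(1, 4)])) ∧
    (∑ ep : EnvPol (Fin 6) (Fin 2) (Fin 5) 1,
        envPolProb muExPP ep *
          (epHistProb ep (polConst 0) 0 [(0, 1)] * epHistProb ep (polConst 1) 0 [(1, 4)])) = 0 := by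
  have hpos : (0 : ℝ) < ∑ ep : EnvPol (Fin 5) (Fin 2) (Fin 5) 1,
      envPolProb muEx ep *
        (epHistProb ep (polConst 0) 0 [(0, 1)] * epHistProb ep (polConst 1) 0 [(1, 4)]) := by
    apply Finset.sum_pos'
    · intro ep _
      exact mul_nonneg (envPolProb_nonneg' _ _)
        (mul_nonneg (epHistProb_nonneg' _ _ _ _) (epHistProb_nonneg' _ _ _ _))
    · refine ⟨(0, fun s a _ => if s = 0 then (if a = 0 then 1 else 4) else s,
        fun s _ => s), by simp, ?_⟩
      simp only [envPolProb, epHistProb, epState, polConst_act, muEx_T, muEx_T0, muEx_Obs,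
        Fin.prod_univ_five, Fin.prod_univ_two, Fin.prod_univ_one]
      simp
  have hzero : (∑ ep : EnvPol (Fin 6) (Fin 2) (Fin 5) 1,
      envPolProb muExPP ep *
        (epHistProb ep (polConst 0) 0 [(0, 1)] * epHistProb ep (polConst 1) 0 [(1, 4)])) = 0 := by
    apply Finset.sum_eq_zero
    rintro ⟨s0, Td, Od⟩ -
    by_cases hs0 : s0 = 0
    · subst hs0
      by_cases h4 : Td 0 1 0 = 4
      · by_cases hO : Od 4 1 = 4
        · rw [envPolProb_eq_zero_Obs muExPP ((0 : Fin 6), Td, Od) 4 1 (by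
            show muExPP.Obs 4 (Od 4 1) = 0
            rw [hO, muExPP_Obs']
            simp), zero_mul]
        · have h0 : epHistProb ((0 : Fin 6), Td, Od) (polConst 1) 0 [(1, 4)] = 0 := by
            simp [epHistProb, epState, h4, hO]
          rw [h0]; ring
      · rw [envPolProb_eq_zero_T muExPP ((0 : Fin 6), Td, Od) 0 1 0 (by
          simp [muExPP_T, h4]), zero_mul]
    · by_cases hs1 : s0 = 1
      · subst hs1
        by_cases h3 : Td 1 0 0 = 3
        · by_cases hO : Od 3 1 = 1
          · rw [envPolProb_eq_zero_Obs muExPP ((1 : Fin 6), Td, Od) 3 1 (by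
              show muExPP.Obs 3 (Od 3 1) = 0
              rw [hO, muExPP_Obs']
              simp), zero_mul]
          · have h0 : epHistProb ((1 : Fin 6), Td, Od) (polConst 0) 0 [(0, 1)] = 0 := by
              simp [epHistProb, epState, h3, hO]
            rw [h0]; ring
        · rw [envPolProb_eq_zero_T muExPP ((1 : Fin 6), Td, Od) 1 0 0 (by
            simp [muExPP_T, h3]), zero_mul]
      · rw [envPolProb_eq_zero_T0 _ _ (by simp [muExPP_T0, hs0, hs1]), zero_mul]
  refine ⟨?_, ?_, hpos, hzero⟩
  · intro π h h' hl hl'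
    unfold condProb
    rw [histProb_eq_aux π h hl, histProb_eq_aux π h' hl']
  · intro H
    have key := H 2 ![(0, [(0, 1)]), (0, [(1, 4)])] ![polConst 0, polConst 1]
      (by intro i; fin_cases i <;> simp)
    simp only [Fin.prod_univ_two, Matrix.cons_val_zero, Matrix.cons_val_one,
      Matrix.head_cons] at key
    rw [key] at hpos
    rw [hzero] at hpos
    exact lt_irrefl 0 hpos
end
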